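/- Let n ≥ 1, let J ⊆ ℤ be a nonempty periodic subset, let k ∈ J with k+1 ∉ J, let l be the smallest element of J greater than k, and let I = J ∪ (k+1+nℤ). Fix a face (v_j)_{j∈J} of type J. Then the map sending a face (w_i)_{i∈I} of type I satisfying w_j = v_j for all j ∈ J to its component w_{k+1} is a bijection onto the set { w ∈ ℤ^n : v_k ≤ w ≤ v_l and Σ(w) = Σ(v_k) + 1 }. -/

import Mathlib

/-- A subset `I ⊆ ℤ` is periodic if `i ∈ I ↔ i + n ∈ I`. -/
def IsPeriodic (n : ℕ) (I : Set ℤ) : Prop := ∀ i : ℤ, i ∈ I ↔ i + n ∈ I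

/-- A face of type `I`, given as a family indexed by the subtype `I`:
`v_{i+n} = v_i + (1,…,1)`, `v_i ≤ v_j` componentwise for `i ≤ j` in `I`, and
`Σ(v_j) - Σ(v_i) = j - i` for `i, j ∈ I`. -/
def IsFaceOn (n : ℕ) (I : Set ℤ) (v : I → Fin n → ℤ) : Prop :=
  (∀ i j : I, (j : ℤ) = (i : ℤ) + n → ∀ t, v j t = v i t + 1) ∧
  (∀ i j : I, (i : ℤ) ≤ (j : ℤ) → ∀ t, v i t ≤ v j t) ∧
  (∀ i j : I, (∑ t, v j t) - (∑ t, v i t) = (j : ℤ) - (i : ℤ))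

lemma periodic_iter {n : ℕ} {J : Set ℤ} (h : IsPeriodic n J) (c : ℤ) (i : ℤ) :
    i ∈ J ↔ i + n * c ∈ J := by
  induction c using Int.induction_on with
  | zero => simp
  | succ m ih =>
      have e : i + (n:ℤ) * (m + 1) = (i + n * m) + n := by ring
      rw [e, ← h (i + n * m)]
      exact ih
  | pred m ih =>
      have e : i + (n:ℤ) * (-m) = (i + n * (-m - 1)) + n := by ring
      rw [e, ← h (i + n * (-m - 1))] at ih
      exact ih

lemma face_shift {n : ℕ} {J : Set ℤ} (hJ : IsPeriodic n J) {v : J → Fin n → ℤ}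
    (hv : IsFaceOn n J v) (c : ℤ) :
    ∀ (i j : J), (j : ℤ) = (i : ℤ) + n * c → ∀ t, v j t = v i t + c := by
  induction c using Int.induction_on with
  | zero =>
      intro i j hij t
      have : i = j := Subtype.ext (by omega)
      rw [this]; ring
  | succ m ih =>
      intro i j hij t
      have hmid : ((i:ℤ) + n * m) ∈ J := (periodic_iter hJ m i).mp i.2
      have h1 : v j t = v ⟨_, hmid⟩ t + 1 :=
        hv.1 ⟨_, hmid⟩ j (by push_cast at hij ⊢; linarith) t
      rw [h1, ih i ⟨_, hmid⟩ rfl t]; ring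
  | pred m ih =>
      intro i j hij t
      have hmid : ((i:ℤ) + n * (-m)) ∈ J := (periodic_iter hJ (-m) i).mp i.2
      have h1 : v ⟨_, hmid⟩ t = v j t + 1 :=
        hv.1 j ⟨_, hmid⟩ (by push_cast at hij ⊢; linarith) t
      have h2 := ih i ⟨_, hmid⟩ rfl t
      have : v j t = v i t + (-m) - 1 := by rw [h2] at h1; linarith
      rw [this]; ring

/-- **Lemma (Kottwitz–Rapoport).** Let `J ⊆ ℤ` be nonempty periodic, `k ∈ J` with
`k + 1 ∉ J`, let `l` be the smallest element of `J` greater than `k`, and let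
`I = J ∪ (k + 1 + nℤ)`. For a fixed face `(v_j)_{j ∈ J}` of type `J`, the map sending a
face `(w_i)_{i ∈ I}` of type `I` with `w_j = v_j` for all `j ∈ J` to its component
`w_{k+1}` is a bijection onto `{w ∈ ℤ^n : v_k ≤ w ≤ v_l, Σ(w) = Σ(v_k) + 1}`. -/
theorem face_extension_bijection (n : ℕ) (hn : 1 ≤ n)
    (J : Set ℤ) (hJper : IsPeriodic n J) (hJne : J.Nonempty)
    (k : ℤ) (hk : k ∈ J) (hk1 : k + 1 ∉ J)
    (l : ℤ) (hl : l ∈ J) (hkl : k < l) (hlmin : ∀ m ∈ J, k < m → l ≤ m)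
    (I : Set ℤ) (hI : ∀ m : ℤ, m ∈ I ↔ m ∈ J ∨ ∃ c : ℤ, m = k + 1 + n * c)
    (hk1I : k + 1 ∈ I)
    (v : J → Fin n → ℤ) (hv : IsFaceOn n J v) :
    Set.BijOn (fun w : I → Fin n → ℤ => w ⟨k + 1, hk1I⟩)
      {w : I → Fin n → ℤ | IsFaceOn n I w ∧
        ∀ (j : I) (h : (j : ℤ) ∈ J), w j = v ⟨(j : ℤ), h⟩}
      {u : Fin n → ℤ | (∀ t, v ⟨k, hk⟩ t ≤ u t) ∧ (∀ t, u t ≤ v ⟨l, hl⟩ t) ∧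
        (∑ t, u t) = (∑ t, v ⟨k, hk⟩ t) + 1} := by
  classical
  have hn1 : (1:ℤ) ≤ (n:ℤ) := by exact_mod_cast hn
  have hnz : (n:ℤ) ≠ 0 := by omega
  have hnotJ : ∀ c : ℤ, k + 1 + n * c ∉ J := fun c hc =>
    hk1 ((periodic_iter hJper c (k+1)).mpr hc)
  have hkI : k ∈ I := (hI k).mpr (Or.inl hk)
  have hlI : l ∈ I := (hI l).mpr (Or.inl hl)
  have hIper : IsPeriodic n I := by
    intro m
    rw [hI, hI]
    constructor
    · rintro (hm | ⟨c, rfl⟩)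
      · exact Or.inl ((hJper m).mp hm)
      · exact Or.inr ⟨c + 1, by ring⟩
    · rintro (hm | ⟨c, hc⟩)
      · exact Or.inl ((hJper m).mpr hm)
      · exact Or.inr ⟨c - 1, by linarith [hc]⟩
  constructor
  · -- MapsTo
    rintro w ⟨hw, hwv⟩
    refine ⟨?_, ?_, ?_⟩
    · intro t
      have h := hw.2.1 ⟨k, hkI⟩ ⟨k+1, hk1I⟩ (show (k:ℤ) ≤ k + 1 by omega) t
      rw [hwv ⟨k, hkI⟩ hk] at h
      exact h
    · intro t
      have h := hw.2.1 ⟨k+1, hk1I⟩ ⟨l, hlI⟩ (show (k:ℤ) + 1 ≤ l by omega) t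
      rw [hwv ⟨l, hlI⟩ hl] at h
      exact h
    · have h := hw.2.2 ⟨k, hkI⟩ ⟨k+1, hk1I⟩
      rw [hwv ⟨k, hkI⟩ hk] at h
      have h' : (∑ t, w ⟨k+1, hk1I⟩ t) - (∑ t, v ⟨k, hk⟩ t) = (k+1) - k := h
      show (∑ t, w ⟨k+1, hk1I⟩ t) = (∑ t, v ⟨k, hk⟩ t) + 1
      omega
  constructor
  · -- InjOn
    rintro w ⟨hw, hwv⟩ w' ⟨hw', hwv'⟩ heq
    have heq' : w ⟨k+1, hk1I⟩ = w' ⟨k+1, hk1I⟩ := heq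
    funext i
    rcases (hI i).mp i.2 with hiJ | ⟨c, hc⟩
    · rw [hwv i hiJ, hwv' i hiJ]
    · funext t
      have e1 := face_shift hIper hw c ⟨k+1, hk1I⟩ i hc t
      have e2 := face_shift hIper hw' c ⟨k+1, hk1I⟩ i hc t
      rw [e1, e2, heq']
  · -- SurjOn
    rintro u ⟨hu1, hu2, hu3⟩
    set w : I → Fin n → ℤ := fun i t =>
      if h : (i:ℤ) ∈ J then v ⟨i, h⟩ t else u t + ((i:ℤ) - (k+1)) / n with hwdef
    have hdiv : ∀ c : ℤ, (k + 1 + (n:ℤ) * c - (k+1)) / n = c := by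
      intro c
      have e : k + 1 + (n:ℤ) * c - (k+1) = n * c := by ring
      rw [e, Int.mul_ediv_cancel_left _ hnz]
    have hwJ : ∀ (i : I) (h : (i:ℤ) ∈ J), w i = v ⟨(i:ℤ), h⟩ := by
      intro i h; funext t; simp only [hwdef, dif_pos h]
    have hwC : ∀ (i : I) (c : ℤ), (i:ℤ) = k + 1 + n * c → ∀ t, w i t = u t + c := by
      intro i c hc t
      have hiJ : (i:ℤ) ∉ J := hc ▸ hnotJ c
      simp only [hwdef, dif_neg hiJ, hc, hdiv c]
    have hkc : ∀ c : ℤ, k + n * c ∈ J := fun c => (periodic_iter hJper c k).mp hk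
    have hlc : ∀ c : ℤ, l + n * c ∈ J := fun c => (periodic_iter hJper c l).mp hl
    have hvk : ∀ c : ℤ, ∀ t, v ⟨k + n * c, hkc c⟩ t = v ⟨k, hk⟩ t + c := by
      intro c t; exact face_shift hJper hv c ⟨k, hk⟩ ⟨k + n * c, hkc c⟩ rfl t
    have hvl : ∀ c : ℤ, ∀ t, v ⟨l + n * c, hlc c⟩ t = v ⟨l, hl⟩ t + c := by
      intro c t; exact face_shift hJper hv c ⟨l, hl⟩ ⟨l + n * c, hlc c⟩ rfl t
    have fact2 : ∀ (j c : ℤ), j ∈ J → k + 1 + n * c ≤ j → l + n * c ≤ j := by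
      intro j c hj hle
      have hj' : j + n * (-c) ∈ J := (periodic_iter hJper (-c) j).mp hj
      have e : j + (n:ℤ) * (-c) = j - n * c := by ring
      rw [e] at hj'
      have := hlmin _ hj' (by omega)
      omega
    refine ⟨w, ⟨⟨?_, ?_, ?_⟩, hwJ⟩, ?_⟩
    · -- shift condition
      intro i j hij t
      by_cases hiJ : (i:ℤ) ∈ J
      · have hjJ : (j:ℤ) ∈ J := by rw [hij]; exact (hJper i).mp hiJ
        rw [hwJ i hiJ, hwJ j hjJ]
        exact hv.1 ⟨i, hiJ⟩ ⟨j, hjJ⟩ hij t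
      · rcases (hI i).mp i.2 with h | ⟨c, hc⟩
        · exact absurd h hiJ
        · rw [hwC i c hc t, hwC j (c+1) (by rw [hij, hc]; ring) t]
          ring
    · -- monotone
      intro i j hij t
      rcases (hI i).mp i.2 with hiJ | ⟨c, hc⟩
      · rcases (hI j).mp j.2 with hjJ | ⟨c', hc'⟩
        · rw [hwJ i hiJ, hwJ j hjJ]
          exact hv.2.1 ⟨i, hiJ⟩ ⟨j, hjJ⟩ hij t
        · rw [hwJ i hiJ, hwC j c' hc' t]
          have hine : (i:ℤ) ≠ k + 1 + n * c' := fun h => hnotJ c' (h ▸ hiJ)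
          have hile : (i:ℤ) ≤ k + n * c' := by omega
          have h1 := hv.2.1 ⟨i, hiJ⟩ ⟨k + n * c', hkc c'⟩ hile t
          have h2 := hvk c' t
          have h3 := hu1 t
          omega
      · rcases (hI j).mp j.2 with hjJ | ⟨c', hc'⟩
        · rw [hwC i c hc t, hwJ j hjJ]
          have hle : l + n * c ≤ (j:ℤ) := fact2 j c hjJ (by omega)
          have h1 := hv.2.1 ⟨l + n * c, hlc c⟩ ⟨j, hjJ⟩ hle t
          have h2 := hvl c t
          have h3 := hu2 t
          omega
        · rw [hwC i c hc t, hwC j c' hc' t]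
          have h1 : (n:ℤ) * c ≤ n * c' := by omega
          have hcc : c ≤ c' := le_of_mul_le_mul_left h1 (by omega)
          omega
    · -- sums
      have key : ∀ i : I, (∑ t, w i t) = (i:ℤ) + ((∑ t, v ⟨k, hk⟩ t) - k) := by
        intro i
        rcases (hI i).mp i.2 with hiJ | ⟨c, hc⟩
        · rw [hwJ i hiJ]
          have h := hv.2.2 ⟨k, hk⟩ ⟨(i:ℤ), hiJ⟩
          have h' : (∑ t, v ⟨(i:ℤ), hiJ⟩ t) - (∑ t, v ⟨k, hk⟩ t) = (i:ℤ) - k := h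
          omega
        · have he : (∑ t, w i t) = ∑ t, (u t + c) := by
            apply Finset.sum_congr rfl
            intro t _
            exact hwC i c hc t
          rw [he, Finset.sum_add_distrib, Finset.sum_const]
          simp only [Finset.card_univ, Fintype.card_fin, nsmul_eq_mul]
          rw [hu3, hc]
          ring
      intro i j
      rw [key i, key j]
      ring
    · -- w at k+1 is u
      funext t
      have h := hwC ⟨k+1, hk1I⟩ 0 (show (k:ℤ)+1 = k + 1 + n * 0 by ring) t
      simpa using h
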